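/- arXiv:1304.5052 — 2 statements merged into one kernel-verified Lean document; each statement's English description precedes it below -/
import Mathlib

section
/- (Gordeev's example: Thompson's conjecture fails for the finitary alternating group.) Let σ be a permutation of ℕ whose set of moved points {x : σ(x) ≠ x} is finite. Then there exists a permutation h of ℕ with finite set of moved points such that h² is not a product of two conjugates of σ: for all permutations τ_1, τ_2 of ℕ, h² ≠ (τ_1 σ τ_1^{-1}) · (τ_2 σ τ_2^{-1}). (Since the square of a finitely supported permutation is an even finitary permutation, h² lies in the finitary alternating group, so no conjugacy class C of the finitary alternating group satisfies C² = G.) -/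
open Equiv

private lemma finRotate_sq_ne (m : ℕ) (hm3 : 3 ≤ m) (y : Fin m) :
    ((finRotate m) ^ 2) y ≠ y := by
  obtain ⟨m', rfl⟩ : ∃ m', m = m' + 1 := ⟨m - 1, by omega⟩
  intro hcontra
  have hyy : y + 1 + 1 = y := by
    simpa [pow_two, finRotate_succ_apply] using hcontra
  have hval : (((y + 1 + 1 : Fin (m' + 1))) : ℕ) = y := congrArg Fin.val hyy
  have hlt : (y : ℕ) < m' + 1 := y.isLt
  rw [Fin.add_def, Fin.add_def] at hval
  simp only [Fin.val_one'] at hval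
  have h1 : 1 % (m' + 1) = 1 := Nat.mod_eq_of_lt (by omega)
  rw [h1] at hval
  set v := (y : ℕ) with hv
  rcases Nat.lt_or_ge (v + 1) (m' + 1) with hc | hc
  · rw [Nat.mod_eq_of_lt hc] at hval
    rcases Nat.lt_or_ge (v + 1 + 1) (m' + 1) with hd | hd
    · rw [Nat.mod_eq_of_lt hd] at hval; omega
    · have he : v + 1 + 1 = m' + 1 := by omega
      rw [he, Nat.mod_self] at hval; omega
  · have he : v = m' := by omega
    have he2 : v + 1 = m' + 1 := by omega
    rw [he2, Nat.mod_self, Nat.zero_add, h1] at hval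
    omega

/-- Gordeev's example: for any finitely supported permutation `σ` of `ℕ`
there is a finitely supported permutation `h` such that `h²` is not a product of two
conjugates of `σ`. Hence Thompson's conjecture fails for the finitary alternating
group. -/
theorem thompson_fails_finitary_alternating
    (σ : Equiv.Perm ℕ) (hσ : {x : ℕ | σ x ≠ x}.Finite) :
    ∃ h : Equiv.Perm ℕ, {x : ℕ | h x ≠ x}.Finite ∧
      ∀ τ₁ τ₂ : Equiv.Perm ℕ, h ^ 2 ≠ (τ₁ * σ * τ₁⁻¹) * (τ₂ * σ * τ₂⁻¹) := by
  classical
  set n := hσ.toFinset.card with hn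
  set m := 2 * n + 3 with hm
  have hm3 : 3 ≤ m := by omega
  have hmpos : 0 < m := by omega
  set f : Fin m ≃ {x : ℕ // x < m} := Fin.equivSubtype
  set h : Equiv.Perm ℕ := (finRotate m).extendDomain f with hh
  -- h fixes everything ≥ m
  have hfix : ∀ x : ℕ, ¬ x < m → h x = x := fun x hx =>
    Perm.extendDomain_apply_not_subtype _ f hx
  have hsupp : {x : ℕ | h x ≠ x} ⊆ Set.Iio m := by
    intro x hx
    by_contra hxm
    exact hx (hfix x hxm)
  refine ⟨h, (Set.finite_Iio m).subset hsupp, ?_⟩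
  -- h^2 moves every x < m
  have hsq : h ^ 2 = ((finRotate m) ^ 2).extendDomain f := by
    rw [pow_two, pow_two, Perm.extendDomain_mul]
  have hmove : ∀ x : ℕ, x < m → (h ^ 2) x ≠ x := by
    intro x hx
    rw [hsq]
    have hx' : ((finRotate m) ^ 2).extendDomain f x
        = ((f (((finRotate m) ^ 2) (f.symm ⟨x, hx⟩))) : ℕ) :=
      Perm.extendDomain_apply_subtype _ f hx
    rw [hx']
    intro hcontra
    have h1 : f (((finRotate m) ^ 2) (f.symm ⟨x, hx⟩)) = ⟨x, hx⟩ := Subtype.ext hcontra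
    exact finRotate_sq_ne m hm3 (f.symm ⟨x, hx⟩)
      (f.injective (h1.trans (f.apply_symm_apply _).symm))
  -- counting
  intro τ₁ τ₂ heq
  have key : ∀ τ : Perm ℕ, {x : ℕ | (τ * σ * τ⁻¹) x ≠ x} = τ '' {x | σ x ≠ x} := by
    intro τ
    ext x
    simp only [Set.mem_setOf_eq, Set.mem_image, Perm.mul_apply]
    constructor
    · intro hx
      exact ⟨τ⁻¹ x, fun hc => hx (by rw [hc]; simp), by simp⟩
    · rintro ⟨y, hy, rfl⟩
      simp only [Perm.inv_def, Equiv.symm_apply_apply]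
      intro hc
      exact hy (τ.injective hc)
  have hsub : Set.Iio m ⊆ τ₁ '' {x | σ x ≠ x} ∪ τ₂ '' {x | σ x ≠ x} := by
    intro x hx
    have := hmove x hx
    rw [heq] at this
    rw [← key τ₁, ← key τ₂]
    by_contra hcon
    simp only [Set.mem_union, Set.mem_setOf_eq, not_or, not_not] at hcon
    apply this
    calc (τ₁ * σ * τ₁⁻¹ * (τ₂ * σ * τ₂⁻¹)) x
        = (τ₁ * σ * τ₁⁻¹) ((τ₂ * σ * τ₂⁻¹) x) := rfl
      _ = (τ₁ * σ * τ₁⁻¹) x := by rw [hcon.2]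
      _ = x := hcon.1
  -- cardinalities
  have hfin1 : (τ₁ '' {x | σ x ≠ x}).Finite := hσ.image _
  have hfin2 : (τ₂ '' {x | σ x ≠ x}).Finite := hσ.image _
  have hcard1 : (τ₁ '' {x | σ x ≠ x}).ncard = n := by
    rw [Set.ncard_image_of_injective _ τ₁.injective, hn, Set.ncard_eq_toFinset_card _ hσ]
  have hcard2 : (τ₂ '' {x | σ x ≠ x}).ncard = n := by
    rw [Set.ncard_image_of_injective _ τ₂.injective, hn, Set.ncard_eq_toFinset_card _ hσ]
  have hle : (Set.Iio m).ncard ≤ 2 * n := by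
    calc (Set.Iio m).ncard ≤ (τ₁ '' {x | σ x ≠ x} ∪ τ₂ '' {x | σ x ≠ x}).ncard :=
          Set.ncard_le_ncard hsub (hfin1.union hfin2)
      _ ≤ (τ₁ '' {x | σ x ≠ x}).ncard + (τ₂ '' {x | σ x ≠ x}).ncard :=
          Set.ncard_union_le _ _
      _ = 2 * n := by rw [hcard1, hcard2]; ring
  have : (Set.Iio m).ncard = m := by
    rw [← Finset.coe_Iio, Set.ncard_coe_finset, Nat.card_Iio]
  omega
end

section
/- Let S be the subgroup of the permutation group of ℕ consisting of all finitely supported permutations (those moving only finitely many points). Then every element of the commutator subgroup of S is a single commutator: for every g in the commutator subgroup of S there exist a, b ∈ S with g = a b a^{-1} b^{-1}. -/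
/-- The subgroup `S` of the permutation group of `ℕ` consisting of the finitely
supported permutations. -/
def finitaryPermGroup : Subgroup (Equiv.Perm ℕ) where
  carrier := {σ : Equiv.Perm ℕ | {x : ℕ | σ x ≠ x}.Finite}
  one_mem' := by
    have : {x : ℕ | (1 : Equiv.Perm ℕ) x ≠ x} = ∅ := by
      ext x; simp
    simp only [Set.mem_setOf_eq, this]
    exact Set.finite_empty
  mul_mem' := by
    intro a b ha hb
    refine Set.Finite.subset (hb.union (ha.preimage (Set.injOn_of_injective b.injective)))
      fun x hx => ?_
    simp only [Set.mem_setOf_eq, Equiv.Perm.mul_apply] at hx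
    by_cases h : b x = x
    · right
      simp only [Set.mem_preimage, Set.mem_setOf_eq, h]
      simpa [h] using hx
    · left
      exact h
  inv_mem' := by
    intro a ha
    have : {x : ℕ | a⁻¹ x ≠ x} = {x : ℕ | a x ≠ x} := by
      ext x
      simp only [Set.mem_setOf_eq, ne_eq]
      constructor
      · intro h hax
        exact h (by rw [← hax, show a⁻¹ (a x) = x from a.symm_apply_apply x]; exact hax.symm)
      · intro h hax
        exact h (by rw [← hax, show a (a⁻¹ x) = x from a.apply_symm_apply x]; exact hax.symm)
    simpa only [Set.mem_setOf_eq, this] using ha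


open Equiv Equiv.Perm Finset
open Equiv Equiv.Perm Finset

private lemma rev_eq_neg {n : ℕ} (x : Fin (n+2)) : Fin.rev x = -(x + 1) := by
  have h : (x + 1) + Fin.rev x = 0 := by
    apply Fin.ext
    have hx := x.isLt
    simp only [Fin.val_add, Fin.val_rev, Fin.val_one, Fin.val_zero]
    rcases Nat.lt_or_ge (x.val + 1) (n + 2) with h | h
    · rw [Nat.mod_eq_of_lt h]
      have : x.val + 1 + (n + 2 - (x.val + 1)) = n + 2 := by omega
      rw [this, Nat.mod_self]
    · have hx1 : x.val = n + 1 := by omega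
      simp [hx1, Nat.mod_self]
  exact eq_neg_of_add_eq_zero_right h

section Model
variable (n : ℕ)

private def rot : Perm (Fin (n+2)) := finRotate (n+2)
private def a0 : Perm (Fin (n+2)) := Fin.revPerm
private def a1 : Perm (Fin (n+2)) := rot n * a0 n
private def a2 : Perm (Fin (n+2)) := rot n * rot n * a0 n

private lemma rot_apply (x : Fin (n+2)) : rot n x = x + 1 := finRotate_succ_apply x

private lemma a0_sq : a0 n * a0 n = 1 := by
  ext x
  simp [a0, Equiv.Perm.mul_apply, Fin.rev_rev]

private lemma rot_rev_rot : rot n * a0 n * rot n = a0 n := by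
  ext x
  simp only [a0, Equiv.Perm.mul_apply, rot_apply, Fin.revPerm_apply, rev_eq_neg]
  abel

private lemma rot_a0 : rot n * a0 n = a0 n * (rot n)⁻¹ :=
  eq_mul_inv_of_mul_eq (rot_rev_rot n)

private lemma a2_eq_conj : a2 n = rot n * a0 n * (rot n)⁻¹ := by
  show rot n * rot n * a0 n = _
  conv_lhs => rw [mul_assoc, rot_a0]
  rw [← mul_assoc]

private lemma conj_mul_conj (g u : Perm (Fin (n+2))) :
    (g * u * g⁻¹) * (g * u * g⁻¹) = g * (u * u) * g⁻¹ := by group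

private lemma a2_sq : a2 n * a2 n = 1 := by
  rw [a2_eq_conj, conj_mul_conj, a0_sq, mul_one, mul_inv_cancel]

private lemma a1_sq : a1 n * a1 n = 1 := by
  have : a1 n * a1 n = (rot n * a0 n * rot n) * a0 n := by
    simp only [a1, mul_assoc]
  rw [this, rot_rev_rot, a0_sq]

private lemma a1_mul_a0 : a1 n * a0 n = rot n := by
  rw [a1, mul_assoc, a0_sq, mul_one]

private lemma a2_mul_a1 : a2 n * a1 n = rot n := by
  rw [a2_eq_conj, a1]
  rw [show rot n * a0 n * (rot n)⁻¹ * (rot n * a0 n) = rot n * (a0 n * a0 n) by group]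
  rw [a0_sq, mul_one]

private lemma card_support_eq (u : Perm (Fin (n+2))) :
    u.support.card = (n + 2) - (univ.filter fun x => u x = x).card := by
  have h := Finset.card_filter_add_card_filter_not
    (s := (univ : Finset (Fin (n+2)))) (p := fun x => u x = x)
  have h2 : u.support = univ.filter fun x => ¬ u x = x := rfl
  rw [h2]
  simp only [Finset.card_univ, Fintype.card_fin] at h ⊢
  omega

private lemma a0_fixed (x : Fin (n+2)) : a0 n x = x ↔ 2 * x.val = n + 1 := by
  have hx := x.isLt
  rw [show a0 n x = Fin.rev x from rfl, Fin.ext_iff, Fin.val_rev]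
  omega

private lemma a1_fixed (x : Fin (n+2)) : a1 n x = x ↔ (x.val = 0 ∨ 2 * x.val = n + 2) := by
  have hx := x.isLt
  rw [show a1 n x = Fin.rev x + 1 from finRotate_succ_apply _, Fin.ext_iff, Fin.val_add_one]
  by_cases h0 : x = 0
  · subst h0
    simp [Fin.rev_zero]
  · have hne : Fin.rev x ≠ Fin.last (n+1) := by
      rw [Fin.rev_ne_iff, Fin.rev_last]
      exact h0
    rw [if_neg hne, Fin.val_rev]
    have hv0 : x.val ≠ 0 := fun h => h0 (Fin.ext h)
    omega

private lemma a0_card_odd (k : ℕ) (h : n = 2*k+1) : (a0 n).support.card = n + 1 := by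
  have he : (univ.filter fun x => a0 n x = x) = {(⟨k+1, by omega⟩ : Fin (n+2))} := by
    ext x
    have hx := x.isLt
    simp only [mem_filter, mem_univ, true_and, mem_singleton, a0_fixed]
    simp only [Fin.ext_iff, Fin.val_mk]
    omega
  rw [card_support_eq, he, Finset.card_singleton]
  omega

private lemma a1_card_odd (k : ℕ) (h : n = 2*k+1) : (a1 n).support.card = n + 1 := by
  have he : (univ.filter fun x => a1 n x = x) = {(0 : Fin (n+2))} := by
    ext x
    have hx := x.isLt
    simp only [mem_filter, mem_univ, true_and, mem_singleton, a1_fixed]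
    simp only [Fin.ext_iff, Fin.val_zero]
    omega
  rw [card_support_eq, he, Finset.card_singleton]
  omega

private lemma a0_card_even (k : ℕ) (h : n = 2*k) : (a0 n).support.card = n + 2 := by
  have he : (univ.filter fun x => a0 n x = x) = (∅ : Finset (Fin (n+2))) := by
    ext x
    have hx := x.isLt
    simp only [mem_filter, mem_univ, true_and, Finset.notMem_empty, iff_false, a0_fixed]
    omega
  rw [card_support_eq, he, Finset.card_empty]
  omega

private lemma a1_card_even (k : ℕ) (h : n = 2*k) : (a1 n).support.card = n := by
  have he : (univ.filter fun x => a1 n x = x) = {(0 : Fin (n+2)), (⟨k+1, by omega⟩ : Fin (n+2))} := by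
    ext x
    have hx := x.isLt
    simp only [mem_filter, mem_univ, true_and, mem_insert, mem_singleton, a1_fixed]
    simp only [Fin.ext_iff, Fin.val_zero, Fin.val_mk]
    omega
  rw [card_support_eq, he]
  rw [Finset.card_insert_of_notMem (by simp [Fin.ext_iff]), Finset.card_singleton]
  omega

end Model


section FiniteCase
variable {β : Type*} [Fintype β] [DecidableEq β]

private def Dcomp (σ : Perm β) (d : ℤ) : Prop :=
  ∃ u v : Perm β, u * u = 1 ∧ v * v = 1 ∧ σ = u * v ∧ u.support ⊆ σ.support ∧
    v.support ⊆ σ.support ∧ (u.support.card : ℤ) = (v.support.card : ℤ) + d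

private def Off (σ : Perm β) (d : ℤ) : Prop :=
  (Perm.sign σ = 1 ∧ d = 0) ∨ (Perm.sign σ = -1 ∧ (d = 2 ∨ d = -2))

private lemma dcomp_rot_odd (n k : ℕ) (h : n = 2*k+1) : Dcomp (rot n) 0 := by
  refine ⟨a1 n, a0 n, a1_sq n, a0_sq n, (a1_mul_a0 n).symm, ?_, ?_, ?_⟩
  · rw [show (rot n).support = univ from support_finRotate]; exact subset_univ _
  · rw [show (rot n).support = univ from support_finRotate]; exact subset_univ _
  · rw [a1_card_odd n k h, a0_card_odd n k h]; ring

private lemma dcomp_rot_even_pos (n k : ℕ) (h : n = 2*k) : Dcomp (rot n) 2 := by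
  have ha2card : (a2 n).support.card = (a0 n).support.card := by
    rw [a2_eq_conj]; exact card_support_conj
  refine ⟨a2 n, a1 n, a2_sq n, a1_sq n, (a2_mul_a1 n).symm, ?_, ?_, ?_⟩
  · rw [show (rot n).support = univ from support_finRotate]; exact subset_univ _
  · rw [show (rot n).support = univ from support_finRotate]; exact subset_univ _
  · rw [ha2card, a0_card_even n k h, a1_card_even n k h]; push_cast; ring

private lemma dcomp_rot_even_neg (n k : ℕ) (h : n = 2*k) : Dcomp (rot n) (-2) := by
  refine ⟨a1 n, a0 n, a1_sq n, a0_sq n, (a1_mul_a0 n).symm, ?_, ?_, ?_⟩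
  · rw [show (rot n).support = univ from support_finRotate]; exact subset_univ _
  · rw [show (rot n).support = univ from support_finRotate]; exact subset_univ _
  · rw [a0_card_even n k h, a1_card_even n k h]; push_cast; ring

private lemma conj_mul_conj' {G : Type*} [Group G] (g u : G) :
    (g * u * g⁻¹) * (g * u * g⁻¹) = g * (u * u) * g⁻¹ := by group

private lemma Dcomp.conj {σ : Perm β} {d : ℤ} (h : Dcomp σ d) (g : Perm β) :
    Dcomp (g * σ * g⁻¹) d := by
  obtain ⟨u, v, hu, hv, hprod, hus, hvs, hcard⟩ := h
  refine ⟨g * u * g⁻¹, g * v * g⁻¹, ?_, ?_, ?_, ?_, ?_, ?_⟩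
  · rw [conj_mul_conj', hu]; group
  · rw [conj_mul_conj', hv]; group
  · rw [hprod]; group
  · rw [support_conj, support_conj]; exact Finset.map_subset_map.mpr hus
  · rw [support_conj, support_conj]; exact Finset.map_subset_map.mpr hvs
  · rw [card_support_conj, card_support_conj]; exact hcard

private lemma Dcomp.extend {α : Type*} [Fintype α] [DecidableEq α] {p : β → Prop}
    [DecidablePred p] (f : α ≃ Subtype p) {σ : Perm α} {d : ℤ} (h : Dcomp σ d) :
    Dcomp (σ.extendDomain f) d := by
  obtain ⟨u, v, hu, hv, hprod, hus, hvs, hcard⟩ := h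
  refine ⟨u.extendDomain f, v.extendDomain f, ?_, ?_, ?_, ?_, ?_, ?_⟩
  · rw [extendDomain_mul, hu, extendDomain_one]
  · rw [extendDomain_mul, hv, extendDomain_one]
  · rw [hprod, ← extendDomain_mul]
  · rw [support_extend_domain, support_extend_domain]; exact Finset.map_subset_map.mpr hus
  · rw [support_extend_domain, support_extend_domain]; exact Finset.map_subset_map.mpr hvs
  · rw [card_support_extend_domain, card_support_extend_domain]; exact hcard

private lemma dcomp_of_cycle {σ : Perm β} (hc : σ.IsCycle) {d : ℤ} (hoff : Off σ d) :
    Dcomp σ d := by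
  obtain ⟨n, hn⟩ : ∃ n, σ.support.card = n + 2 := by
    obtain ⟨m, hm⟩ := Nat.exists_eq_add_of_le hc.two_le_card_support
    exact ⟨m, by omega⟩
  have hfcard : Fintype.card (Fin (n+2)) = Fintype.card {x // x ∈ σ.support} := by
    rw [Fintype.card_fin, Fintype.card_coe, hn]
  let f : Fin (n+2) ≃ {x // x ∈ σ.support} := Fintype.equivOfCardEq hfcard
  have hRcyc : ((rot n).extendDomain f).IsCycle := (isCycle_finRotate).extendDomain f
  have hRcard : ((rot n).extendDomain f).support.card = σ.support.card := by
    rw [card_support_extend_domain, show (rot n).support = univ from support_finRotate,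
      Finset.card_univ, Fintype.card_fin, hn]
  obtain ⟨g, hg⟩ := isConj_iff.mp (hRcyc.isConj hc hRcard)
  have hsign := hc.sign
  have hDrot : Dcomp (rot n) d := by
    rcases Nat.even_or_odd n with ⟨k, hk⟩ | ⟨k, hk⟩
    · -- support card n+2 even, sign σ = -1
      have hs : Perm.sign σ = -1 := by
        rw [hsign, hn]
        rw [show n + 2 = 2*(k+1) by omega]
        rw [(even_two_mul (k+1)).neg_one_pow]
      rcases hoff with ⟨h1, _⟩ | ⟨_, hd | hd⟩
      · rw [hs] at h1; exact absurd h1 (by decide)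
      · rw [hd]; exact dcomp_rot_even_pos n k (by omega)
      · rw [hd]; exact dcomp_rot_even_neg n k (by omega)
    · have hs : Perm.sign σ = 1 := by
        rw [hsign, hn]
        rw [show n + 2 = 2*(k+1)+1 by omega]
        rw [(odd_two_mul_add_one (k+1)).neg_one_pow]
        decide
      rcases hoff with ⟨_, hd⟩ | ⟨h1, _⟩
      · rw [hd]; exact dcomp_rot_odd n k (by omega)
      · rw [hs] at h1; exact absurd h1 (by decide)
  have := (hDrot.extend f).conj g
  rwa [hg] at this

private lemma dcomp_mul_disjoint {σ τ : Perm β} (hd : σ.Disjoint τ) {d₁ d₂ : ℤ}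
    (h₁ : Dcomp σ d₁) (h₂ : Dcomp τ d₂) : Dcomp (σ * τ) (d₁ + d₂) := by
  obtain ⟨u₁, v₁, hu₁, hv₁, hp₁, hus₁, hvs₁, hc₁⟩ := h₁
  obtain ⟨u₂, v₂, hu₂, hv₂, hp₂, hus₂, hvs₂, hc₂⟩ := h₂
  have hsupp := hd.support_mul
  have hdis : _root_.Disjoint σ.support τ.support :=
    disjoint_iff_disjoint_support.mp hd
  have duu : u₁.Disjoint u₂ := disjoint_iff_disjoint_support.mpr
    (Finset.disjoint_of_subset_left hus₁ (Finset.disjoint_of_subset_right hus₂ hdis))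
  have dvv : v₁.Disjoint v₂ := disjoint_iff_disjoint_support.mpr
    (Finset.disjoint_of_subset_left hvs₁ (Finset.disjoint_of_subset_right hvs₂ hdis))
  have dvu : v₁.Disjoint u₂ := disjoint_iff_disjoint_support.mpr
    (Finset.disjoint_of_subset_left hvs₁ (Finset.disjoint_of_subset_right hus₂ hdis))
  refine ⟨u₁ * u₂, v₁ * v₂, ?_, ?_, ?_, ?_, ?_, ?_⟩
  · rw [show u₁ * u₂ * (u₁ * u₂) = u₁ * (u₂ * u₁) * u₂ by group, ← duu.commute.eq]
    rw [show u₁ * (u₁ * u₂) * u₂ = (u₁ * u₁) * (u₂ * u₂) by group, hu₁, hu₂, mul_one]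
  · rw [show v₁ * v₂ * (v₁ * v₂) = v₁ * (v₂ * v₁) * v₂ by group, ← dvv.commute.eq]
    rw [show v₁ * (v₁ * v₂) * v₂ = (v₁ * v₁) * (v₂ * v₂) by group, hv₁, hv₂, mul_one]
  · rw [hp₁, hp₂, show u₁ * v₁ * (u₂ * v₂) = u₁ * (v₁ * u₂) * v₂ by group, dvu.commute.eq]
    group
  · refine subset_trans (support_mul_le _ _) ?_
    rw [hsupp]
    exact Finset.union_subset_union hus₁ hus₂
  · refine subset_trans (support_mul_le _ _) ?_
    rw [hsupp]
    exact Finset.union_subset_union hvs₁ hvs₂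
  · rw [duu.card_support_mul, dvv.card_support_mul]
    push_cast
    omega

private lemma dcomp_main (σ : Perm β) : ∀ d : ℤ, Off σ d → Dcomp σ d := by
  induction σ using Equiv.Perm.cycle_induction_on with
  | base_one =>
    intro d hoff
    rcases hoff with ⟨_, hd⟩ | ⟨h1, _⟩
    · exact ⟨1, 1, one_mul 1, one_mul 1, (one_mul 1).symm, by simp, by simp, by simp [hd]⟩
    · rw [map_one] at h1; exact absurd h1 (by decide)
  | base_cycles σ hσ =>
    intro d hoff
    exact dcomp_of_cycle hσ hoff
  | induction_disjoint σ τ hdis hc hσ hτ =>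
    intro d hoff
    have hmul : Perm.sign (σ * τ) = Perm.sign σ * Perm.sign τ := map_mul _ _ _
    rcases Int.units_eq_one_or (Perm.sign σ) with h1 | h1 <;>
      rcases Int.units_eq_one_or (Perm.sign τ) with h2 | h2
    · rw [h1, h2, mul_one] at hmul
      rcases hoff with ⟨_, hd⟩ | ⟨hneg, _⟩
      · subst hd
        simpa using dcomp_mul_disjoint hdis (hσ 0 (Or.inl ⟨h1, rfl⟩)) (hτ 0 (Or.inl ⟨h2, rfl⟩))
      · rw [hmul] at hneg; exact absurd hneg (by decide)
    · rw [h1, h2, one_mul] at hmul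
      rcases hoff with ⟨hpos, _⟩ | ⟨_, hd⟩
      · rw [hmul] at hpos; exact absurd hpos (by decide)
      · simpa using dcomp_mul_disjoint hdis (hσ 0 (Or.inl ⟨h1, rfl⟩)) (hτ d (Or.inr ⟨h2, hd⟩))
    · rw [h1, h2, mul_one] at hmul
      rcases hoff with ⟨hpos, _⟩ | ⟨_, hd⟩
      · rw [hmul] at hpos; exact absurd hpos (by decide)
      · simpa using dcomp_mul_disjoint hdis (hσ d (Or.inr ⟨h1, hd⟩)) (hτ 0 (Or.inl ⟨h2, rfl⟩))
    · rw [h1, h2] at hmul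
      have hmul' : Perm.sign (σ * τ) = 1 := by rw [hmul]; decide
      rcases hoff with ⟨_, hd⟩ | ⟨hneg, _⟩
      · subst hd
        have := dcomp_mul_disjoint hdis (hσ 2 (Or.inr ⟨h1, Or.inl rfl⟩))
          (hτ (-2) (Or.inr ⟨h2, Or.inr rfl⟩))
        simpa using this
      · rw [hmul'] at hneg; exact absurd hneg (by decide)

private lemma sq_one_cycleType {u : Perm β} (h : u * u = 1) :
    u.cycleType = Multiset.replicate u.cycleType.card 2 := by
  rw [Multiset.eq_replicate_card]
  intro x hx
  have h2 : 2 ≤ x := Equiv.Perm.two_le_of_mem_cycleType hx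
  have hdvd : x ∣ orderOf u := by
    rw [← Equiv.Perm.lcm_cycleType]
    exact Multiset.dvd_lcm hx
  have ho : orderOf u ∣ 2 := orderOf_dvd_of_pow_eq_one (by rw [pow_two]; exact h)
  have := hdvd.trans ho
  have := Nat.le_of_dvd (by norm_num) this
  omega

private theorem finite_even_is_commutator (σ : Perm β) (hσ : Perm.sign σ = 1) :
    ∃ a b : Perm β, σ = a * b * a⁻¹ * b⁻¹ := by
  obtain ⟨u, v, hu, hv, hprod, _, _, hcard⟩ := dcomp_main σ 0 (Or.inl ⟨hσ, rfl⟩)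
  have hcard' : u.support.card = v.support.card := by exact_mod_cast by simpa using hcard
  have hct : u.cycleType = v.cycleType := by
    have h1 := sq_one_cycleType hu
    have h2 := sq_one_cycleType hv
    have hsum : u.cycleType.sum = v.cycleType.sum := by
      rw [Equiv.Perm.sum_cycleType, Equiv.Perm.sum_cycleType, hcard']
    rw [h1, h2] at hsum ⊢
    rw [Multiset.sum_replicate, Multiset.sum_replicate] at hsum
    have : u.cycleType.card = v.cycleType.card := by
      simp only [smul_eq_mul] at hsum
      omega
    rw [this]
  obtain ⟨g, hg⟩ := isConj_iff.mp (Equiv.Perm.isConj_iff_cycleType_eq.mpr hct)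
  have huinv : u⁻¹ = u := by
    rw [← mul_one u⁻¹, ← hu, ← mul_assoc, inv_mul_cancel, one_mul]
  refine ⟨u, g, ?_⟩
  rw [hprod, ← hg, huinv]
  group

end FiniteCase

section Transfer

private def extN (n : ℕ) : Perm (Fin n) →* Perm ℕ :=
  Equiv.Perm.extendDomainHom Fin.equivSubtype

private lemma extN_apply_of_ge {n : ℕ} (σ : Perm (Fin n)) {x : ℕ} (hx : ¬ x < n) :
    extN n σ x = x :=
  Equiv.Perm.extendDomain_apply_not_subtype σ Fin.equivSubtype hx

private lemma extN_moved {n : ℕ} (σ : Perm (Fin n)) {x : ℕ} (hx : extN n σ x ≠ x) : x < n := by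
  by_contra h
  exact hx (extN_apply_of_ge σ h)

private lemma extN_restrict {n : ℕ} (π : Perm ℕ) (h : ∀ x, π x ≠ x → x < n) :
    ∃ σ : Perm (Fin n), extN n σ = π := by
  have key : ∀ x : ℕ, x < n → π x < n := by
    intro x hx
    by_cases hfix : π x = x
    · rwa [hfix]
    · have : π (π x) ≠ π x := fun hc => hfix (π.injective hc)
      exact h _ this
  have hiff : ∀ x : ℕ, x < n ↔ π x < n := by
    intro x
    refine ⟨key x, fun hx => ?_⟩
    by_cases hfix : π x = x
    · rwa [← hfix]
    · exact h _ hfix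
  refine ⟨(Fin.equivSubtype.symm).permCongr (π.subtypePerm (fun x => (hiff x).symm)), ?_⟩
  ext x
  by_cases hx : x < n
  · rw [show extN n ((Fin.equivSubtype.symm).permCongr (π.subtypePerm (fun x => (hiff x).symm))) x =
      _ from Equiv.Perm.extendDomain_apply_subtype _ Fin.equivSubtype hx]
    simp [Equiv.permCongr_apply, Equiv.Perm.subtypePerm_apply]
  · rw [extN_apply_of_ge _ hx]
    by_contra hc
    exact hx (h _ (Ne.symm hc))

private def padEquiv {n m : ℕ} (h : n ≤ m) : Fin n ≃ {i : Fin m // (i : ℕ) < n} where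
  toFun x := ⟨⟨x.1, lt_of_lt_of_le x.2 h⟩, x.2⟩
  invFun y := ⟨y.1.1, y.2⟩
  left_inv x := rfl
  right_inv y := rfl

private lemma extN_pad {n m : ℕ} (h : n ≤ m) (σ : Perm (Fin n)) :
    extN m (σ.extendDomain (padEquiv h)) = extN n σ := by
  ext x
  by_cases hxm : x < m
  · by_cases hxn : x < n
    · rw [show extN m (σ.extendDomain (padEquiv h)) x =
        _ from Equiv.Perm.extendDomain_apply_subtype _ Fin.equivSubtype hxm]
      rw [show extN n σ x = _ from Equiv.Perm.extendDomain_apply_subtype _ Fin.equivSubtype hxn]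
      have hsub : ((Fin.equivSubtype.symm ⟨x, hxm⟩ : Fin m) : ℕ) < n := by
        simp [Fin.equivSubtype]; exact hxn
      rw [Equiv.Perm.extendDomain_apply_subtype _ (padEquiv h) hsub]
      simp [padEquiv, Fin.equivSubtype]
    · rw [show extN m (σ.extendDomain (padEquiv h)) x =
        _ from Equiv.Perm.extendDomain_apply_subtype _ Fin.equivSubtype hxm]
      have hsub : ¬ ((Fin.equivSubtype.symm ⟨x, hxm⟩ : Fin m) : ℕ) < n := by
        simp [Fin.equivSubtype]; omega
      rw [Equiv.Perm.extendDomain_apply_not_subtype _ (padEquiv h) hsub]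
      rw [extN_apply_of_ge _ hxn]
      simp [Fin.equivSubtype]
  · rw [extN_apply_of_ge _ hxm, extN_apply_of_ge _ (fun hc => hxm (lt_of_lt_of_le hc h))]

private lemma extN_sign_le {n m : ℕ} (h : n ≤ m) (σ : Perm (Fin n)) (τ : Perm (Fin m))
    (heq : extN n σ = extN m τ) : Perm.sign σ = Perm.sign τ := by
  have hpad := extN_pad h σ
  have : σ.extendDomain (padEquiv h) = τ := by
    apply Equiv.Perm.extendDomainHom_injective (f := Fin.equivSubtype)
    show extN m _ = extN m τ
    rw [hpad, heq]
  rw [← this, Equiv.Perm.sign_extendDomain]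

private lemma extN_sign {n m : ℕ} (σ : Perm (Fin n)) (τ : Perm (Fin m))
    (heq : extN n σ = extN m τ) : Perm.sign σ = Perm.sign τ := by
  rcases le_total n m with h | h
  · exact extN_sign_le h σ τ heq
  · exact (extN_sign_le h τ σ heq.symm).symm

private lemma extN_mem (n : ℕ) (σ : Perm (Fin n)) : extN n σ ∈ finitaryPermGroup := by
  show {x : ℕ | extN n σ x ≠ x}.Finite
  exact Set.Finite.subset (Set.finite_Iio n) fun x hx => extN_moved σ hx

end Transfer


private def QProp (x : ↥finitaryPermGroup) : Prop :=
  ∃ (n : ℕ) (σ : Perm (Fin n)), Perm.sign σ = 1 ∧ extN n σ = (x : Perm ℕ)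

private lemma qprop_lift {N : ℕ} (x : ↥finitaryPermGroup) (hx : QProp x)
    (hN : ∀ y : ℕ, (x : Perm ℕ) y ≠ y → y < N) :
    ∃ τ : Perm (Fin N), Perm.sign τ = 1 ∧ extN N τ = (x : Perm ℕ) := by
  obtain ⟨n, σ, hsgn, hext⟩ := hx
  obtain ⟨τ, hτ⟩ := extN_restrict (n := N) (x : Perm ℕ) hN
  refine ⟨τ, ?_, hτ⟩
  rw [← extN_sign σ τ (by rw [hext, hτ])]
  exact hsgn

open scoped commutatorElement in
private lemma qprop_of_mem_commutator (g : ↥finitaryPermGroup)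
    (hg : g ∈ commutator ↥finitaryPermGroup) : QProp g := by
  rw [commutator_def, Subgroup.commutator_def] at hg
  refine Subgroup.closure_induction (p := fun x _ => QProp x) ?_ ?_ ?_ ?_ hg
  · rintro x ⟨a, -, b, -, rfl⟩
    have hfin : ({y : ℕ | (a : Perm ℕ) y ≠ y} ∪ {y : ℕ | (b : Perm ℕ) y ≠ y}).Finite :=
      Set.Finite.union a.2 b.2
    obtain ⟨N, hN⟩ := hfin.bddAbove
    have hNa : ∀ y : ℕ, (a : Perm ℕ) y ≠ y → y < N + 1 := fun y hy =>
      Nat.lt_succ_of_le (hN (Set.mem_union_left _ hy))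
    have hNb : ∀ y : ℕ, (b : Perm ℕ) y ≠ y → y < N + 1 := fun y hy =>
      Nat.lt_succ_of_le (hN (Set.mem_union_right _ hy))
    obtain ⟨σa, hσa⟩ := extN_restrict (n := N + 1) (a : Perm ℕ) hNa
    obtain ⟨σb, hσb⟩ := extN_restrict (n := N + 1) (b : Perm ℕ) hNb
    refine ⟨N + 1, ⁅σa, σb⁆, ?_, ?_⟩
    · rw [map_commutatorElement]
      exact commutatorElement_eq_one_iff_commute.mpr (Commute.all _ _)
    · rw [map_commutatorElement]
      simp only [commutatorElement_def, hσa, hσb]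
      push_cast
      rfl
  · exact ⟨0, 1, map_one _, by simp⟩
  · rintro x y - - hx hy
    have hfin : ({z : ℕ | (x : Perm ℕ) z ≠ z} ∪ {z : ℕ | (y : Perm ℕ) z ≠ z}).Finite :=
      Set.Finite.union x.2 y.2
    obtain ⟨N, hN⟩ := hfin.bddAbove
    obtain ⟨τx, hsx, hex⟩ := qprop_lift (N := N + 1) x hx fun z hz =>
      Nat.lt_succ_of_le (hN (Set.mem_union_left _ hz))
    obtain ⟨τy, hsy, hey⟩ := qprop_lift (N := N + 1) y hy fun z hz =>
      Nat.lt_succ_of_le (hN (Set.mem_union_right _ hz))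
    refine ⟨N + 1, τx * τy, by rw [map_mul, hsx, hsy, mul_one], ?_⟩
    rw [map_mul, hex, hey]
    rfl
  · rintro x - ⟨n, σ, hsgn, hext⟩
    refine ⟨n, σ⁻¹, by rw [map_inv, hsgn]; rfl, ?_⟩
    rw [map_inv, hext]
    rfl

/-- every element of the commutator subgroup of the group `S` of finitely
supported permutations of `ℕ` is a single commutator. -/
theorem finitary_commutator_width_one
    (g : finitaryPermGroup) (hg : g ∈ commutator ↥finitaryPermGroup) :
    ∃ a b : finitaryPermGroup, g = a * b * a⁻¹ * b⁻¹ := by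
  obtain ⟨n, σ, hsgn, hext⟩ := qprop_of_mem_commutator g hg
  obtain ⟨u, w, huw⟩ := finite_even_is_commutator σ hsgn
  refine ⟨⟨extN n u, extN_mem n u⟩, ⟨extN n w, extN_mem n w⟩, ?_⟩
  apply Subtype.ext
  push_cast
  rw [← hext, huw]
  simp only [map_mul, map_inv]
end
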